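/- arXiv:0907.4827 — 5 statements merged into one kernel-verified Lean document; each statement's English description precedes it below -/
import Mathlib

section
/- There is an absolute constant C such that for all real numbers λ ≥ 1, N ≥ 1, and all τ₀ ∈ ℝ, one has ∫_{N λ^{−1/2}}^{∞} (1 + λ|s² − τ₀|)^{−2} ds ≤ C N^{−1} λ^{−1/2}. -/
open MeasureTheory Real Set Filter

lemma aux_deriv {a : ℝ} (ha : 0 < a) {x : ℝ} (hx : 0 ≤ x) :
    HasDerivAt (fun y : ℝ => -(a⁻¹) * (1 + a * y)⁻¹) (((1 + a * x) ^ 2)⁻¹) x := by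
  have hne : 1 + a * x ≠ 0 := by positivity
  have h1 : HasDerivAt (fun y : ℝ => 1 + a * y) a x := by
    simpa using ((hasDerivAt_id x).const_mul a).const_add 1
  have h2 := (h1.inv hne).const_mul (-(a⁻¹))
  convert h2 using 1
  all_goals first | rfl | field_simp

lemma aux_int {a : ℝ} (ha : 0 < a) :
    IntegrableOn (fun x : ℝ => ((1 + a * x) ^ 2)⁻¹) (Ioi 0) ∧
      (∫ x in Ioi (0:ℝ), ((1 + a * x) ^ 2)⁻¹) = a⁻¹ := by
  have hderiv : ∀ x ∈ Ici (0:ℝ),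
      HasDerivAt (fun y : ℝ => -(a⁻¹) * (1 + a * y)⁻¹) (((1 + a * x) ^ 2)⁻¹) x :=
    fun x hx => aux_deriv ha hx
  have hpos : ∀ x ∈ Ioi (0:ℝ), 0 ≤ ((1 + a * x) ^ 2)⁻¹ := by
    intro x hx; positivity
  have htend : Tendsto (fun y : ℝ => -(a⁻¹) * (1 + a * y)⁻¹) atTop (nhds 0) := by
    have h1 : Tendsto (fun y : ℝ => 1 + a * y) atTop atTop :=
      tendsto_atTop_add_const_left atTop 1 (tendsto_id.const_mul_atTop ha)
    simpa using (h1.inv_tendsto_atTop).const_mul (-(a⁻¹))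
  refine ⟨integrableOn_Ioi_deriv_of_nonneg' hderiv hpos htend, ?_⟩
  rw [integral_Ioi_of_hasDerivAt_of_nonneg' hderiv hpos htend]
  simp

/-- The function `x ↦ ((1 + a |x|)²)⁻¹` is integrable on `ℝ` with integral `2 a⁻¹`. -/
lemma aux_abs_int {a : ℝ} (ha : 0 < a) :
    Integrable (fun x : ℝ => ((1 + a * |x|) ^ 2)⁻¹) ∧
      (∫ x : ℝ, ((1 + a * |x|) ^ 2)⁻¹) = 2 * a⁻¹ := by
  have hIoi0 := aux_int ha
  have hIoi : IntegrableOn (fun x : ℝ => ((1 + a * |x|) ^ 2)⁻¹) (Ioi 0) := by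
    apply hIoi0.1.congr_fun (fun x hx => by rw [abs_of_pos hx]) measurableSet_Ioi
  have hIic : IntegrableOn (fun x : ℝ => ((1 + a * |x|) ^ 2)⁻¹) (Iic 0) := by
    rw [← Measure.map_neg_eq_self (volume : Measure ℝ)]
    have m : MeasurableEmbedding fun x : ℝ => -x := (Homeomorph.neg ℝ).measurableEmbedding
    rw [m.integrableOn_map_iff]
    simp_rw [Function.comp_def, abs_neg, neg_preimage, neg_Iic, neg_zero]
    exact (integrableOn_Ici_iff_integrableOn_Ioi).mpr hIoi
  have hInt : Integrable (fun x : ℝ => ((1 + a * |x|) ^ 2)⁻¹) := by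
    rw [← integrableOn_univ, ← Iic_union_Ioi (a := (0:ℝ))]
    exact hIic.union hIoi
  refine ⟨hInt, ?_⟩
  rw [integral_comp_abs (f := fun x => ((1 + a * x) ^ 2)⁻¹), hIoi0.2]

/-- There is an absolute constant `C` such that for all real `λ ≥ 1`,
`N ≥ 1` and all `τ₀ ∈ ℝ`, one has
`∫_{N λ^{-1/2}}^∞ (1 + λ|s² - τ₀|)⁻² ds ≤ C N⁻¹ λ^{-1/2}`. -/
theorem bilinear_kernel_integral_bound :
    ∃ C : ℝ, 0 < C ∧ ∀ lam N τ₀ : ℝ, 1 ≤ lam → 1 ≤ N →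
      (∫ s in Set.Ici (N * lam ^ (-(1 : ℝ) / 2)),
          ((1 + lam * |s ^ 2 - τ₀|) ^ 2)⁻¹)
        ≤ C * N⁻¹ * lam ^ (-(1 : ℝ) / 2) := by
  refine ⟨2, by norm_num, fun lam N τ₀ hlam hN => ?_⟩
  have hlam0 : (0:ℝ) < lam := lt_of_lt_of_le one_pos hlam
  have hN0 : (0:ℝ) < N := lt_of_lt_of_le one_pos hN
  set c : ℝ := N * lam ^ (-(1 : ℝ) / 2) with hc
  set a : ℝ := N * lam ^ ((1 : ℝ) / 2) with hadef
  have ha : 0 < a := mul_pos hN0 (rpow_pos_of_pos hlam0 _)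
  have hc0 : 0 < c := mul_pos hN0 (rpow_pos_of_pos hlam0 _)
  set r : ℝ := Real.sqrt (max τ₀ 0) with hr
  have hr0 : 0 ≤ r := Real.sqrt_nonneg _
  -- key identity : lam * c = a
  have hlc : lam * c = a := by
    have h2 : lam ^ ((1:ℝ)/2) = lam * lam ^ (-(1:ℝ)/2) := by
      rw [show ((1:ℝ)/2) = 1 + (-(1:ℝ)/2) by norm_num, Real.rpow_add hlam0, Real.rpow_one]
    rw [hc, hadef, h2]; ring
  -- pointwise bound
  have hpt : ∀ s ∈ Ici c, ((1 + lam * |s ^ 2 - τ₀|) ^ 2)⁻¹ ≤ ((1 + a * |s - r|) ^ 2)⁻¹ := by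
    intro s hs
    have hsc : c ≤ s := hs
    have hs0 : 0 < s := lt_of_lt_of_le hc0 hsc
    have key : s * |s - r| ≤ |s ^ 2 - τ₀| := by
      rcases le_or_gt τ₀ 0 with h | h
      · have : r = 0 := by rw [hr, max_eq_right h, Real.sqrt_zero]
        rw [this, sub_zero, abs_of_pos hs0]
        have : s ^ 2 - τ₀ = s * s - τ₀ := by ring
        rw [abs_of_nonneg (by nlinarith), this]
        nlinarith
      · have hτ : max τ₀ 0 = τ₀ := max_eq_left h.le
        have hr2 : r ^ 2 = τ₀ := by rw [hr, hτ]; exact Real.sq_sqrt h.le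
        have hfac : s ^ 2 - τ₀ = (s - r) * (s + r) := by rw [← hr2]; ring
        rw [hfac, abs_mul, abs_of_nonneg (by linarith : (0:ℝ) ≤ s + r)]
        calc s * |s - r| = |s - r| * s := by ring
          _ ≤ |s - r| * (s + r) := by
              apply mul_le_mul_of_nonneg_left (by linarith) (abs_nonneg _)
    have hmono : a * |s - r| ≤ lam * |s ^ 2 - τ₀| := by
      calc a * |s - r| = lam * c * |s - r| := by rw [hlc]
        _ ≤ lam * s * |s - r| :=
            mul_le_mul_of_nonneg_right (mul_le_mul_of_nonneg_left hsc hlam0.le) (abs_nonneg _)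
        _ = lam * (s * |s - r|) := by ring
        _ ≤ lam * |s ^ 2 - τ₀| := mul_le_mul_of_nonneg_left key hlam0.le
    exact inv_anti₀ (by positivity) (pow_le_pow_left₀ (by positivity) (by linarith) 2)
  obtain ⟨hgint, hgval⟩ := aux_abs_int ha
  have hgtr : Integrable (fun s : ℝ => ((1 + a * |s - r|) ^ 2)⁻¹) := hgint.comp_sub_right r
  -- integrability of f on Ici c
  have hfmeas : AEStronglyMeasurable (fun s : ℝ => ((1 + lam * |s ^ 2 - τ₀|) ^ 2)⁻¹)
      (volume.restrict (Ici c)) := by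
    apply Continuous.aestronglyMeasurable
    have hcont : Continuous fun s : ℝ => (1 + lam * |s ^ 2 - τ₀|) ^ 2 := by fun_prop
    exact hcont.inv₀ (fun s => by positivity)
  have hfint : IntegrableOn (fun s : ℝ => ((1 + lam * |s ^ 2 - τ₀|) ^ 2)⁻¹) (Ici c) := by
    apply Integrable.mono hgtr.integrableOn hfmeas
    filter_upwards [ae_restrict_mem measurableSet_Ici] with s hs
    have h1 : (0:ℝ) ≤ ((1 + lam * |s ^ 2 - τ₀|) ^ 2)⁻¹ := by positivity
    have h2 : (0:ℝ) ≤ ((1 + a * |s - r|) ^ 2)⁻¹ := by positivity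
    rw [Real.norm_of_nonneg h1, Real.norm_of_nonneg h2]
    exact hpt s hs
  calc (∫ s in Ici c, ((1 + lam * |s ^ 2 - τ₀|) ^ 2)⁻¹)
      ≤ ∫ s in Ici c, ((1 + a * |s - r|) ^ 2)⁻¹ :=
        setIntegral_mono_on hfint hgtr.integrableOn measurableSet_Ici hpt
    _ ≤ ∫ s : ℝ, ((1 + a * |s - r|) ^ 2)⁻¹ := by
        apply setIntegral_le_integral hgtr
        filter_upwards with s
        positivity
    _ = 2 * a⁻¹ := by
        rw [← hgval]
        exact integral_sub_right_eq_self (fun x : ℝ => ((1 + a * |x|) ^ 2)⁻¹) r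
    _ = 2 * N⁻¹ * lam ^ (-(1 : ℝ) / 2) := by
        rw [hadef, mul_inv, ← Real.rpow_neg hlam0.le]
        ring_nf
end

section
/- There is an absolute constant C such that for all λ ≥ 1 and N ≥ 1 the kernel K(t,t'; s,s') := (1 + λ|(t+t') − (s+s')|)^{−2} · (1 + λ|(t−t')² − (s−s')²|)^{−2} satisfies sup_{(s,s') ∈ ℝ²} ∬_{{(t,t') : |t−t'| ≥ N λ^{−1/2}}} K(t,t'; s,s') dt dt' ≤ C λ^{−3/2} N^{−1}. -/
open MeasureTheory Real Set

lemma scale_lint (F : ℝ → ENNReal) (hF : Measurable F) {a : ℝ} (ha : a ≠ 0) :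
    ∫⁻ x : ℝ, F (a * x) = ENNReal.ofReal |a⁻¹| * ∫⁻ x, F x := by
  rw [← lintegral_map hF (measurable_const_mul a), Real.map_volume_mul_left ha,
    lintegral_smul_measure, smul_eq_mul]

lemma baseBound {lam : ℝ} (hlam : 0 < lam) (c : ℝ) :
    ∫⁻ x : ℝ, ENNReal.ofReal (((1 + lam * |x - c|) ^ 2)⁻¹) ≤ ENNReal.ofReal (π / lam) := by
  have h0 : ∫⁻ u : ℝ, ENNReal.ofReal ((1 + u ^ 2)⁻¹) = ENNReal.ofReal π := by
    rw [← integral_univ_inv_one_add_sq,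
      MeasureTheory.ofReal_integral_eq_lintegral_ofReal integrable_inv_one_add_sq
        (Filter.Eventually.of_forall fun x => by positivity)]
  calc ∫⁻ x : ℝ, ENNReal.ofReal (((1 + lam * |x - c|) ^ 2)⁻¹)
      ≤ ∫⁻ x : ℝ, ENNReal.ofReal ((1 + (lam * (x - c)) ^ 2)⁻¹) := by
        refine lintegral_mono fun x => ENNReal.ofReal_le_ofReal ?_
        have h1 : (0:ℝ) ≤ lam * |x - c| := by positivity
        have h2 : (1 + (lam * (x - c)) ^ 2) ≤ (1 + lam * |x - c|) ^ 2 := by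
          have : (lam * (x - c)) ^ 2 = (lam * |x - c|) ^ 2 := by
            rw [mul_pow, mul_pow, sq_abs]
          nlinarith
        exact inv_anti₀ (by positivity) h2
    _ = ∫⁻ x : ℝ, ENNReal.ofReal ((1 + (lam * x) ^ 2)⁻¹) :=
        lintegral_sub_right_eq_self (fun x => ENNReal.ofReal ((1 + (lam * x) ^ 2)⁻¹)) c
    _ = ENNReal.ofReal |lam⁻¹| * ∫⁻ u : ℝ, ENNReal.ofReal ((1 + u ^ 2)⁻¹) :=
        scale_lint (fun u => ENNReal.ofReal ((1 + u ^ 2)⁻¹)) (by fun_prop) hlam.ne'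
    _ = ENNReal.ofReal (π / lam) := by
        rw [h0, ← ENNReal.ofReal_mul (abs_nonneg _), abs_of_nonneg (by positivity : (0:ℝ) ≤ lam⁻¹)]
        ring_nf

lemma lint_image_deriv {s : Set ℝ} {f f' : ℝ → ℝ} (hs : MeasurableSet s)
    (hf' : ∀ x ∈ s, HasDerivWithinAt f (f' x) s x) (hf : Set.InjOn f s) (g : ℝ → ENNReal) :
    ∫⁻ x in f '' s, g x = ∫⁻ x in s, ENNReal.ofReal |f' x| * g (f x) := by
  simpa only [ContinuousLinearMap.det_toSpanSingleton] using
    MeasureTheory.lintegral_image_eq_lintegral_abs_det_fderiv_mul volume hs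
      (fun x hx => (hf' x hx).hasFDerivWithinAt) hf g

lemma tailBound {lam δ b : ℝ} (hlam : 0 < lam) (hδ : 0 < δ) {s : Set ℝ}
    (hs : MeasurableSet s) (habs : ∀ v ∈ s, δ ≤ |v|)
    (hinj : Set.InjOn (fun v : ℝ => v ^ 2) s) :
    ∫⁻ v in s, ENNReal.ofReal (((1 + lam * |v ^ 2 - b|) ^ 2)⁻¹)
      ≤ ENNReal.ofReal (2 * δ)⁻¹ * ENNReal.ofReal (π / lam) := by
  set Hb : ℝ → ENNReal := fun w => ENNReal.ofReal (((1 + lam * |w - b|) ^ 2)⁻¹) with hHbdef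
  have hHb : Measurable Hb := by fun_prop
  have hderiv : ∀ v ∈ s, HasDerivWithinAt (fun v : ℝ => v ^ 2) (2 * v) s v := by
    intro v _
    simpa using (hasDerivAt_pow 2 v).hasDerivWithinAt
  have key : ∫⁻ v in s, ENNReal.ofReal |2 * v| * Hb (v ^ 2)
      = ∫⁻ w in (fun v : ℝ => v ^ 2) '' s, Hb w :=
    (lint_image_deriv hs hderiv hinj Hb).symm
  calc ∫⁻ v in s, Hb (v ^ 2)
      ≤ ∫⁻ v in s, ENNReal.ofReal (2 * δ)⁻¹ * (ENNReal.ofReal |2 * v| * Hb (v ^ 2)) := by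
        refine setLIntegral_mono (by fun_prop) fun v hv => ?_
        rw [← mul_assoc, ← ENNReal.ofReal_mul (by positivity)]
        refine le_mul_of_one_le_left zero_le ?_
        rw [show (1 : ENNReal) = ENNReal.ofReal 1 by simp]
        refine ENNReal.ofReal_le_ofReal ?_
        have h1 := habs v hv
        have h2 : (2 * δ)⁻¹ * |2 * v| = |v| / δ := by
          rw [abs_mul]
          simp [abs_of_nonneg, mul_inv]
          field_simp
        rw [h2, le_div_iff₀ hδ, one_mul]
        exact h1
    _ = ENNReal.ofReal (2 * δ)⁻¹ * ∫⁻ v in s, ENNReal.ofReal |2 * v| * Hb (v ^ 2) :=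
        lintegral_const_mul' _ _ ENNReal.ofReal_ne_top
    _ = ENNReal.ofReal (2 * δ)⁻¹ * ∫⁻ w in (fun v : ℝ => v ^ 2) '' s, Hb w := by rw [key]
    _ ≤ ENNReal.ofReal (2 * δ)⁻¹ * ∫⁻ w, Hb w :=
        mul_le_mul_right (setLIntegral_le_lintegral _ _) _
    _ ≤ ENNReal.ofReal (2 * δ)⁻¹ * ENNReal.ofReal (π / lam) :=
        mul_le_mul_right (baseBound hlam b) _

/-- There is an absolute constant `C` such that for all `λ ≥ 1` and `N ≥ 1`
the kernel `K(t,t';s,s') = (1 + λ|(t+t') - (s+s')|)⁻² (1 + λ|(t-t')² - (s-s')²|)⁻²` satisfies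
`sup_{(s,s')} ∬_{|t-t'| ≥ N λ^{-1/2}} K(t,t';s,s') dt dt' ≤ C λ^{-3/2} N⁻¹`. -/
theorem kernel_offdiagonal_L1_bound :
    ∃ C : ℝ, 0 < C ∧ ∀ lam N : ℝ, 1 ≤ lam → 1 ≤ N → ∀ s s' : ℝ,
      (∫ p : ℝ × ℝ in {p : ℝ × ℝ | N * lam ^ (-(1 : ℝ) / 2) ≤ |p.1 - p.2|},
          ((1 + lam * |(p.1 + p.2) - (s + s')|) ^ 2)⁻¹ *
            ((1 + lam * |(p.1 - p.2) ^ 2 - (s - s') ^ 2|) ^ 2)⁻¹)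
        ≤ C * lam ^ (-(3 : ℝ) / 2) * N⁻¹ := by
  refine ⟨8, by norm_num, ?_⟩
  intro lam N hlam hN s s'
  have hlam0 : (0:ℝ) < lam := lt_of_lt_of_le one_pos hlam
  have hN0 : (0:ℝ) < N := lt_of_lt_of_le one_pos hN
  set δ : ℝ := N * lam ^ (-(1:ℝ)/2) with hδdef
  have hu : (0:ℝ) < lam ^ (-(1:ℝ)/2) := Real.rpow_pos_of_pos hlam0 _
  have hw : (0:ℝ) < lam ^ (-(3:ℝ)/2) := Real.rpow_pos_of_pos hlam0 _
  have hδ : (0:ℝ) < δ := by positivity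
  set S : Set (ℝ × ℝ) := {p : ℝ × ℝ | δ ≤ |p.1 - p.2|} with hSdef
  have hS : MeasurableSet S :=
    measurableSet_le measurable_const ((measurable_fst.sub measurable_snd).abs)
  set G : ℝ → ENNReal := fun x => ENNReal.ofReal (((1 + lam * |x - (s + s')|) ^ 2)⁻¹) with hGdef
  set H : ℝ → ENNReal := fun v => ENNReal.ofReal (((1 + lam * |v ^ 2 - (s - s') ^ 2|) ^ 2)⁻¹)
    with hHdef
  have hG : Measurable G := by fun_prop
  have hH : Measurable H := by fun_prop
  set k : ℝ × ℝ → ℝ := fun p =>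
    ((1 + lam * |(p.1 + p.2) - (s + s')|) ^ 2)⁻¹ *
      ((1 + lam * |(p.1 - p.2) ^ 2 - (s - s') ^ 2|) ^ 2)⁻¹ with hkdef
  have hk_meas : Measurable k := by fun_prop
  have hrw : ∫ p in S, k p = (∫⁻ p in S, ENNReal.ofReal (k p)).toReal :=
    integral_eq_lintegral_of_nonneg_ae
      (Filter.Eventually.of_forall fun p => by positivity)
      hk_meas.aestronglyMeasurable
  rw [hrw]
  refine ENNReal.toReal_le_of_le_ofReal (by positivity) ?_
  -- pass to the ENNReal world
  set f : ℝ × ℝ → ENNReal := fun p => G (p.1 + p.2) * H (p.1 - p.2) with hfdef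
  have hf : Measurable f := by
    exact (hG.comp (measurable_fst.add measurable_snd)).mul
      (hH.comp (measurable_fst.sub measurable_snd))
  have hsplit : ∀ p : ℝ × ℝ, ENNReal.ofReal (k p) = f p := by
    intro p
    rw [hkdef, hfdef]
    exact ENNReal.ofReal_mul (by positivity)
  set A : Set ℝ := {v : ℝ | δ ≤ |v|} with hAdef
  have hA : MeasurableSet A := measurableSet_le measurable_const measurable_abs
  set W : ℝ × ℝ → ENNReal := fun z => A.indicator H z.1 * G (z.1 + 2 * z.2) with hWdef
  have hWmeas : Measurable W :=
    ((hH.indicator hA).comp measurable_fst).mul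
      (hG.comp (measurable_fst.add (measurable_snd.const_mul 2)))
  have hT : MeasurePreserving (fun z : ℝ × ℝ => (z.1 + z.2, z.2))
      (volume : Measure (ℝ × ℝ)) volume := by
    rw [Measure.volume_eq_prod]
    exact measurePreserving_add_prod volume volume
  have hWeq : ∀ z : ℝ × ℝ, S.indicator f (z.1 + z.2, z.2) = W z := by
    intro z
    have hmem : ((z.1 + z.2, z.2) ∈ S) ↔ z.1 ∈ A := by
      simp only [hSdef, hAdef, Set.mem_setOf_eq, add_sub_cancel_right]
    by_cases hz : z.1 ∈ A
    · rw [Set.indicator_of_mem (hmem.mpr hz)]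
      show f (z.1 + z.2, z.2) = A.indicator H z.1 * G (z.1 + 2 * z.2)
      rw [Set.indicator_of_mem hz]
      show G (z.1 + z.2 + z.2) * H (z.1 + z.2 - z.2) = H z.1 * G (z.1 + 2 * z.2)
      rw [show z.1 + z.2 + z.2 = z.1 + 2 * z.2 by ring, show z.1 + z.2 - z.2 = z.1 by ring,
        mul_comm]
    · rw [Set.indicator_of_notMem (fun h => hz (hmem.mp h))]
      show (0 : ENNReal) = A.indicator H z.1 * G (z.1 + 2 * z.2)
      rw [Set.indicator_of_notMem hz, zero_mul]
  have step1 : ∫⁻ p in S, ENNReal.ofReal (k p) = ∫⁻ z, W z := by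
    calc ∫⁻ p in S, ENNReal.ofReal (k p) = ∫⁻ p in S, f p := by
          exact lintegral_congr fun p => hsplit p
      _ = ∫⁻ p, S.indicator f p := (lintegral_indicator hS f).symm
      _ = ∫⁻ z, S.indicator f ((fun z : ℝ × ℝ => (z.1 + z.2, z.2)) z) :=
          (hT.lintegral_comp (hf.indicator hS)).symm
      _ = ∫⁻ z, W z := lintegral_congr fun z => hWeq z
  rw [step1]
  have hne : ∀ v : ℝ, A.indicator H v ≠ ⊤ := by
    intro v
    by_cases hv : v ∈ A
    · rw [Set.indicator_of_mem hv]
      exact ENNReal.ofReal_ne_top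
    · rw [Set.indicator_of_notMem hv]
      exact ENNReal.zero_ne_top
  -- Tonelli
  have step2 : ∫⁻ z, W z = ∫⁻ v, A.indicator H v * ∫⁻ t, G (v + 2 * t) := by
    rw [Measure.volume_eq_prod, lintegral_prod W hWmeas.aemeasurable]
    refine lintegral_congr fun v => ?_
    show (∫⁻ y, A.indicator H v * G (v + 2 * y)) = _
    exact lintegral_const_mul' (A.indicator H v) (fun y => G (v + 2 * y)) (hne v)
  rw [step2]
  have hinner : ∀ v : ℝ, (∫⁻ t : ℝ, G (v + 2 * t)) ≤
      ENNReal.ofReal 2⁻¹ * ENNReal.ofReal (π / lam) := by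
    intro v
    have h1 : (∫⁻ t : ℝ, G (v + 2 * t)) = ENNReal.ofReal |(2:ℝ)⁻¹| * ∫⁻ x, G (v + x) :=
      scale_lint (fun x => G (v + x)) (hG.comp (measurable_const.add measurable_id)) two_ne_zero
    rw [h1, lintegral_add_left_eq_self G v, abs_of_nonneg (by norm_num : (0:ℝ) ≤ 2⁻¹)]
    refine mul_le_mul_right ?_ _
    have := baseBound hlam0 (s + s')
    exact this
  set c₁ : ENNReal := ENNReal.ofReal 2⁻¹ * ENNReal.ofReal (π / lam) with hc₁
  set c₂ : ENNReal := ENNReal.ofReal (2 * δ)⁻¹ * ENNReal.ofReal (π / lam) with hc₂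
  have step3 : (∫⁻ v, A.indicator H v * ∫⁻ t, G (v + 2 * t)) ≤ (c₂ + c₂) * c₁ := by
    calc (∫⁻ v, A.indicator H v * ∫⁻ t, G (v + 2 * t))
        ≤ ∫⁻ v, A.indicator H v * c₁ :=
          lintegral_mono fun v => mul_le_mul_right (hinner v) _
      _ = (∫⁻ v, A.indicator H v) * c₁ :=
          lintegral_mul_const' c₁ _ (ENNReal.mul_ne_top ENNReal.ofReal_ne_top
            ENNReal.ofReal_ne_top)
      _ = (∫⁻ v in A, H v) * c₁ := by rw [lintegral_indicator hA]
      _ ≤ (c₂ + c₂) * c₁ := by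
          refine mul_le_mul_left ?_ c₁
          have hAeq : A = Iic (-δ) ∪ Ici δ := by
            ext v
            simp only [hAdef, Set.mem_setOf_eq, Set.mem_union, Set.mem_Iic, Set.mem_Ici,
              le_abs]
            constructor
            · rintro (h | h)
              · right; exact h
              · left; linarith
            · rintro (h | h)
              · right; linarith
              · left; exact h
          rw [hAeq]
          have hIic : (∫⁻ v in Iic (-δ), H v) ≤ c₂ := by
            refine tailBound hlam0 hδ measurableSet_Iic (fun v hv => ?_) ?_
            · rw [Set.mem_Iic] at hv
              rw [abs_of_nonpos (by linarith)]
              linarith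
            · intro x hx y hy hxy
              rw [Set.mem_Iic] at hx hy
              have hxy2 : x ^ 2 = y ^ 2 := hxy
              have hfac : (x - y) * (x + y) = 0 := by linear_combination hxy2
              rcases mul_eq_zero.mp hfac with h | h
              · linarith
              · exfalso; linarith
          have hIci : (∫⁻ v in Ici δ, H v) ≤ c₂ := by
            refine tailBound hlam0 hδ measurableSet_Ici (fun v hv => ?_) ?_
            · rw [Set.mem_Ici] at hv
              rw [abs_of_nonneg (by linarith)]
              exact hv
            · intro x hx y hy hxy
              rw [Set.mem_Ici] at hx hy
              have hxy2 : x ^ 2 = y ^ 2 := hxy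
              have hfac : (x - y) * (x + y) = 0 := by linear_combination hxy2
              rcases mul_eq_zero.mp hfac with h | h
              · linarith
              · exfalso; linarith
          exact le_trans (lintegral_union_le _ _ _) (add_le_add hIic hIci)
  refine le_trans step3 ?_
  -- final numeric step
  have hcomb : (c₂ + c₂) * c₁ =
      ENNReal.ofReal (2 * ((2 * δ)⁻¹ * (π / lam)) * (2⁻¹ * (π / lam))) := by
    rw [hc₁, hc₂, ← two_mul]
    rw [show (2 : ENNReal) = ENNReal.ofReal 2 by norm_num]
    rw [← ENNReal.ofReal_mul (by positivity), ← ENNReal.ofReal_mul (by norm_num),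
      ← ENNReal.ofReal_mul (by positivity), ← ENNReal.ofReal_mul (by positivity)]
  rw [hcomb]
  refine ENNReal.ofReal_le_ofReal ?_
  have hprod : lam ^ (-(1:ℝ)/2) * lam ^ 2 = (lam ^ (-(3:ℝ)/2))⁻¹ := by
    rw [← Real.rpow_natCast lam 2, ← Real.rpow_add hlam0, ← Real.rpow_neg hlam0.le]
    norm_num
  have hw' : lam ^ (-(3:ℝ)/2) = (lam ^ (-(1:ℝ)/2) * lam ^ 2)⁻¹ := by
    rw [hprod, inv_inv]
  have hLHS : 2 * ((2 * δ)⁻¹ * (π / lam)) * (2⁻¹ * (π / lam)) =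
      π ^ 2 * lam ^ (-(3:ℝ)/2) * (2 * N)⁻¹ := by
    rw [hδdef, hw']
    field_simp
  rw [hLHS]
  have hπ : π ^ 2 ≤ 16 := by nlinarith [pi_le_four, pi_pos]
  calc π ^ 2 * lam ^ (-(3:ℝ)/2) * (2 * N)⁻¹
      ≤ 16 * lam ^ (-(3:ℝ)/2) * (2 * N)⁻¹ := by
        have h0 : (0:ℝ) ≤ lam ^ (-(3:ℝ)/2) * (2 * N)⁻¹ := by positivity
        nlinarith
    _ = 8 * lam ^ (-(3:ℝ)/2) * N⁻¹ := by
        field_simp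
        ring
end

section
/- Let φ : ℝ² × ℝ → ℝ be smooth and satisfy the Carleson–Sjölin condition at a point (x₀, t₀). Define Φ : ℝ² × ℝ² → ℝ by Φ(x, u₁, u₂) = φ(x, (u₂ + u₁)/2) + φ(x, (u₂ − u₁)/2). Then there exist c > 0 and a neighborhood U of (x₀, (0, 2t₀)) in ℝ² × ℝ² such that for all (x, u₁, u₂) ∈ U one has |det(∂²Φ/∂x_i∂u_j)_{i,j=1,2}| ≥ c |u₁|. -/
noncomputable section

/-- The partial derivative `∂φ/∂xᵢ` of `φ : ℝ² × ℝ → ℝ` in the `i`-th `x`-direction,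
with `ℝ²` realized as `EuclideanSpace ℝ (Fin 2)`. -/
def phiXDeriv (φ : EuclideanSpace ℝ (Fin 2) × ℝ → ℝ) (i : Fin 2)
    (x : EuclideanSpace ℝ (Fin 2)) (t : ℝ) : ℝ :=
  fderiv ℝ (fun y => φ (y, t)) x (EuclideanSpace.single i 1)

/-- The Carleson–Sjölin determinant
`det [[∂²φ/∂x₁∂t, ∂²φ/∂x₂∂t], [∂³φ/∂x₁∂t², ∂³φ/∂x₂∂t²]]` at the point `(x, t)`. -/
def carlesonSjolinDet (φ : EuclideanSpace ℝ (Fin 2) × ℝ → ℝ)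
    (x : EuclideanSpace ℝ (Fin 2)) (t : ℝ) : ℝ :=
  deriv (phiXDeriv φ 0 x) t * deriv (deriv (phiXDeriv φ 1 x)) t -
    deriv (phiXDeriv φ 1 x) t * deriv (deriv (phiXDeriv φ 0 x)) t

/-- The coordinate directions of `ℝ × ℝ` (the `u = (u₁, u₂)` variables). -/
def uDir : Fin 2 → ℝ × ℝ := ![(1, 0), (0, 1)]

/-- The entries of the mixed Hessian `∂²Φ/∂xᵢ∂uⱼ` of
`Φ : ℝ² × (ℝ × ℝ) → ℝ`. -/
def mixedHessianEntryXU (Φ : EuclideanSpace ℝ (Fin 2) × (ℝ × ℝ) → ℝ) (i j : Fin 2)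
    (x : EuclideanSpace ℝ (Fin 2)) (u : ℝ × ℝ) : ℝ :=
  fderiv ℝ (fun w => fderiv ℝ (fun y => Φ (y, w)) x (EuclideanSpace.single i 1)) u (uDir j)

/-- The determinant of the `2 × 2` mixed Hessian `(∂²Φ/∂xᵢ∂uⱼ)`. -/
def mixedHessianDetXU (Φ : EuclideanSpace ℝ (Fin 2) × (ℝ × ℝ) → ℝ)
    (x : EuclideanSpace ℝ (Fin 2)) (u : ℝ × ℝ) : ℝ :=
  mixedHessianEntryXU Φ 0 0 x u * mixedHessianEntryXU Φ 1 1 x u -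
    mixedHessianEntryXU Φ 0 1 x u * mixedHessianEntryXU Φ 1 0 x u

/-! ### Auxiliary material -/

section helpers

variable {E' : Type*} [NormedAddCommGroup E'] [NormedSpace ℝ E']
variable {F : Type*} [NormedAddCommGroup F] [NormedSpace ℝ F]

theorem mySliceLeft {f : E' × F → ℝ} (hf : Differentiable ℝ f) (x : E') (t : F) :
    HasFDerivAt (fun y => f (y, t))
      ((fderiv ℝ f (x, t)).comp (ContinuousLinearMap.inl ℝ E' F)) x :=
  (hf (x, t)).hasFDerivAt.comp x (hasFDerivAt_prodMk_left x t)

theorem mySliceRight {f : E' × ℝ → ℝ} (hf : Differentiable ℝ f) (x : E') (t : ℝ) :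
    HasDerivAt (fun τ => f (x, τ)) (fderiv ℝ f (x, t) (0, 1)) t := by
  have h := (hf (x, t)).hasFDerivAt.comp_hasDerivAt t
    ((hasDerivAt_const t x).prodMk (hasDerivAt_id t))
  simpa [Function.comp_def] using h

theorem myContDiffFDerivApply {f : E' → ℝ} (hf : ContDiff ℝ (⊤ : ℕ∞) f) (v : E') :
    ContDiff ℝ (⊤ : ℕ∞) (fun p => fderiv ℝ f p v) :=
  (hf.fderiv_right (by exact_mod_cast le_top)).clm_apply contDiff_const

theorem myMVT {f f' : ℝ → ℝ} (hd : ∀ x, HasDerivAt f (f' x) x) {a b : ℝ} (hab : a ≠ b) :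
    ∃ ξ, ξ ∈ Set.Ioo (min a b) (max a b) ∧ f b - f a = f' ξ * (b - a) := by
  rcases lt_or_gt_of_ne hab with h | h
  · obtain ⟨ξ, hξ, heq⟩ := exists_hasDerivAt_eq_slope f f' h
      (fun x _ => (hd x).continuousAt.continuousWithinAt) (fun x _ => hd x)
    refine ⟨ξ, by simpa [min_eq_left h.le, max_eq_right h.le] using hξ, ?_⟩
    rw [heq, div_mul_cancel₀ _ (sub_ne_zero.2 h.ne')]
  · obtain ⟨ξ, hξ, heq⟩ := exists_hasDerivAt_eq_slope f f' h
      (fun x _ => (hd x).continuousAt.continuousWithinAt) (fun x _ => hd x)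
    refine ⟨ξ, by simpa [min_eq_right h.le, max_eq_left h.le] using hξ, ?_⟩
    have : f a - f b = f' ξ * (a - b) := by
      rw [heq, div_mul_cancel₀ _ (sub_ne_zero.2 h.ne')]
    linarith [this]

end helpers

/-- Abbreviation for the plane. -/
abbrev E2aux := EuclideanSpace ℝ (Fin 2)

/-- `∂φ/∂xᵢ` as a smooth function of the pair `(x, t)`. -/
def gF (φ : E2aux × ℝ → ℝ) (i : Fin 2) (p : E2aux × ℝ) : ℝ :=
  fderiv ℝ φ p (EuclideanSpace.single i 1, 0)

/-- `∂²φ/∂xᵢ∂t` as a smooth function of the pair `(x, t)`. -/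
def bF (φ : E2aux × ℝ → ℝ) (i : Fin 2) (p : E2aux × ℝ) : ℝ :=
  fderiv ℝ (fun q => gF φ i q) p (0, 1)

/-- `∂³φ/∂xᵢ∂t²` as a smooth function of the pair `(x, t)`. -/
def cF (φ : E2aux × ℝ → ℝ) (i : Fin 2) (p : E2aux × ℝ) : ℝ :=
  fderiv ℝ (fun q => bF φ i q) p (0, 1)

variable {φ : E2aux × ℝ → ℝ}

theorem gF_smooth (hφ : ContDiff ℝ (⊤ : ℕ∞) φ) (i : Fin 2) :
    ContDiff ℝ (⊤ : ℕ∞) (gF φ i) := myContDiffFDerivApply hφ _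

theorem bF_smooth (hφ : ContDiff ℝ (⊤ : ℕ∞) φ) (i : Fin 2) :
    ContDiff ℝ (⊤ : ℕ∞) (bF φ i) := myContDiffFDerivApply (gF_smooth hφ i) _

theorem cF_smooth (hφ : ContDiff ℝ (⊤ : ℕ∞) φ) (i : Fin 2) :
    ContDiff ℝ (⊤ : ℕ∞) (cF φ i) := myContDiffFDerivApply (bF_smooth hφ i) _

theorem phiXDeriv_eq (hφ : ContDiff ℝ (⊤ : ℕ∞) φ) (i : Fin 2) (x : E2aux) (t : ℝ) :
    phiXDeriv φ i x t = gF φ i (x, t) := by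
  rw [phiXDeriv, (mySliceLeft (hφ.differentiable (by simp)) x t).fderiv]
  rfl

theorem hasDerivAt_gF (hφ : ContDiff ℝ (⊤ : ℕ∞) φ) (i : Fin 2) (x : E2aux) (t : ℝ) :
    HasDerivAt (fun τ => gF φ i (x, τ)) (bF φ i (x, t)) t :=
  mySliceRight ((gF_smooth hφ i).differentiable (by simp)) x t

theorem hasDerivAt_bF (hφ : ContDiff ℝ (⊤ : ℕ∞) φ) (i : Fin 2) (x : E2aux) (t : ℝ) :
    HasDerivAt (fun τ => bF φ i (x, τ)) (cF φ i (x, t)) t :=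
  mySliceRight ((bF_smooth hφ i).differentiable (by simp)) x t

theorem deriv_phiXDeriv (hφ : ContDiff ℝ (⊤ : ℕ∞) φ) (i : Fin 2) (x : E2aux) (t : ℝ) :
    deriv (phiXDeriv φ i x) t = bF φ i (x, t) := by
  have : phiXDeriv φ i x = fun τ => gF φ i (x, τ) := funext fun τ => phiXDeriv_eq hφ i x τ
  rw [this, (hasDerivAt_gF hφ i x t).deriv]

theorem deriv2_phiXDeriv (hφ : ContDiff ℝ (⊤ : ℕ∞) φ) (i : Fin 2) (x : E2aux) (t : ℝ) :
    deriv (deriv (phiXDeriv φ i x)) t = cF φ i (x, t) := by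
  have : deriv (phiXDeriv φ i x) = fun τ => bF φ i (x, τ) :=
    funext fun τ => deriv_phiXDeriv hφ i x τ
  rw [this, (hasDerivAt_bF hφ i x t).deriv]

theorem carlesonSjolinDet_eq (hφ : ContDiff ℝ (⊤ : ℕ∞) φ) (x : E2aux) (t : ℝ) :
    carlesonSjolinDet φ x t =
      bF φ 0 (x, t) * cF φ 1 (x, t) - bF φ 1 (x, t) * cF φ 0 (x, t) := by
  rw [carlesonSjolinDet, deriv_phiXDeriv hφ, deriv_phiXDeriv hφ,
    deriv2_phiXDeriv hφ, deriv2_phiXDeriv hφ]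

/-- The linear map `u ↦ (u₂ + u₁)/2`. -/
def LsAux : (ℝ × ℝ) →L[ℝ] ℝ :=
  (1 / 2 : ℝ) • (ContinuousLinearMap.snd ℝ ℝ ℝ + ContinuousLinearMap.fst ℝ ℝ ℝ)

/-- The linear map `u ↦ (u₂ - u₁)/2`. -/
def LrAux : (ℝ × ℝ) →L[ℝ] ℝ :=
  (1 / 2 : ℝ) • (ContinuousLinearMap.snd ℝ ℝ ℝ - ContinuousLinearMap.fst ℝ ℝ ℝ)

theorem entry_eq (hφ : ContDiff ℝ (⊤ : ℕ∞) φ)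
    (Φ : E2aux × (ℝ × ℝ) → ℝ)
    (hΦ : ∀ (x : E2aux) (u : ℝ × ℝ),
      Φ (x, u) = φ (x, (u.2 + u.1) / 2) + φ (x, (u.2 - u.1) / 2))
    (i j : Fin 2) (x : E2aux) (u : ℝ × ℝ) :
    mixedHessianEntryXU Φ i j x u =
      bF φ i (x, (u.2 + u.1) / 2) * LsAux (uDir j) +
        bF φ i (x, (u.2 - u.1) / 2) * LrAux (uDir j) := by
  have hdφ : Differentiable ℝ φ := hφ.differentiable (by simp)
  have hInner : ∀ w : ℝ × ℝ,
      fderiv ℝ (fun y => Φ (y, w)) x (EuclideanSpace.single i 1) =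
        gF φ i (x, (w.2 + w.1) / 2) + gF φ i (x, (w.2 - w.1) / 2) := by
    intro w
    have e : (fun y => Φ (y, w)) =
        fun y => φ (y, (w.2 + w.1) / 2) + φ (y, (w.2 - w.1) / 2) :=
      funext fun y => hΦ y w
    have hA := mySliceLeft hdφ x ((w.2 + w.1) / 2)
    have hB := mySliceLeft hdφ x ((w.2 - w.1) / 2)
    rw [e, fderiv_fun_add hA.differentiableAt hB.differentiableAt, hA.fderiv, hB.fderiv]
    rfl
  rw [mixedHessianEntryXU]
  have efun : (fun w => fderiv ℝ (fun y => Φ (y, w)) x (EuclideanSpace.single i 1)) =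
      fun w : ℝ × ℝ => gF φ i (x, (w.2 + w.1) / 2) + gF φ i (x, (w.2 - w.1) / 2) :=
    funext hInner
  rw [efun]
  have hsL : HasFDerivAt (fun w : ℝ × ℝ => (w.2 + w.1) / 2) LsAux u := by
    have e2 : (fun w : ℝ × ℝ => (w.2 + w.1) / 2) = fun w => LsAux w := by
      funext w
      simp [LsAux]
      ring
    rw [e2]
    exact LsAux.hasFDerivAt
  have hrL : HasFDerivAt (fun w : ℝ × ℝ => (w.2 - w.1) / 2) LrAux u := by
    have e2 : (fun w : ℝ × ℝ => (w.2 - w.1) / 2) = fun w => LrAux w := by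
      funext w
      simp [LrAux]
      ring
    rw [e2]
    exact LrAux.hasFDerivAt
  have h1 : HasFDerivAt (fun w : ℝ × ℝ => gF φ i (x, (w.2 + w.1) / 2))
      (bF φ i (x, (u.2 + u.1) / 2) • LsAux) u :=
    (hasDerivAt_gF hφ i x ((u.2 + u.1) / 2)).comp_hasFDerivAt (h₂ := fun τ => gF φ i (x, τ)) u hsL
  have h2 : HasFDerivAt (fun w : ℝ × ℝ => gF φ i (x, (w.2 - w.1) / 2))
      (bF φ i (x, (u.2 - u.1) / 2) • LrAux) u :=
    (hasDerivAt_gF hφ i x ((u.2 - u.1) / 2)).comp_hasFDerivAt (h₂ := fun τ => gF φ i (x, τ)) u hrL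
  rw [fderiv_fun_add h1.differentiableAt h2.differentiableAt, h1.fderiv, h2.fderiv]
  simp [smul_eq_mul]

theorem det_eq (hφ : ContDiff ℝ (⊤ : ℕ∞) φ)
    (Φ : E2aux × (ℝ × ℝ) → ℝ)
    (hΦ : ∀ (x : E2aux) (u : ℝ × ℝ),
      Φ (x, u) = φ (x, (u.2 + u.1) / 2) + φ (x, (u.2 - u.1) / 2))
    (x : E2aux) (u : ℝ × ℝ) :
    mixedHessianDetXU Φ x u =
      (bF φ 0 (x, (u.2 + u.1) / 2) * bF φ 1 (x, (u.2 - u.1) / 2) -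
        bF φ 0 (x, (u.2 - u.1) / 2) * bF φ 1 (x, (u.2 + u.1) / 2)) / 2 := by
  rw [mixedHessianDetXU, entry_eq hφ Φ hΦ, entry_eq hφ Φ hΦ, entry_eq hφ Φ hΦ,
    entry_eq hφ Φ hΦ]
  have h00 : LsAux (uDir 0) = 1 / 2 := by simp [LsAux, uDir]
  have h01 : LsAux (uDir 1) = 1 / 2 := by simp [LsAux, uDir]
  have h10 : LrAux (uDir 0) = -(1 / 2) := by simp [LrAux, uDir]
  have h11 : LrAux (uDir 1) = 1 / 2 := by simp [LrAux, uDir]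
  rw [h00, h01, h10, h11]
  ring

/-- The comparison function for the continuity argument. -/
def DFaux (φ : E2aux × ℝ → ℝ) (q : E2aux × ℝ × ℝ × ℝ) : ℝ :=
  bF φ 0 (q.1, q.2.1) * cF φ 1 (q.1, q.2.2.2) - bF φ 1 (q.1, q.2.1) * cF φ 0 (q.1, q.2.2.1)

/-- If `φ : ℝ² × ℝ → ℝ` is smooth and satisfies the Carleson–Sjölin
condition at `(x₀, t₀)`, and `Φ(x, u₁, u₂) = φ(x, (u₂+u₁)/2) + φ(x, (u₂-u₁)/2)`, then there
are `c > 0` and a neighborhood `U` of `(x₀, (0, 2t₀))` on which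
`|det(∂²Φ/∂xᵢ∂uⱼ)| ≥ c |u₁|`. -/
theorem mixed_hessian_det_lower_bound_of_carleson_sjolin
    (φ : EuclideanSpace ℝ (Fin 2) × ℝ → ℝ) (hφ : ContDiff ℝ (⊤ : ℕ∞) φ)
    (x₀ : EuclideanSpace ℝ (Fin 2)) (t₀ : ℝ) (hCS : carlesonSjolinDet φ x₀ t₀ ≠ 0)
    (Φ : EuclideanSpace ℝ (Fin 2) × (ℝ × ℝ) → ℝ)
    (hΦ : ∀ (x : EuclideanSpace ℝ (Fin 2)) (u : ℝ × ℝ),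
      Φ (x, u) = φ (x, (u.2 + u.1) / 2) + φ (x, (u.2 - u.1) / 2)) :
    ∃ c > (0 : ℝ), ∃ U ∈ nhds ((x₀, ((0 : ℝ), 2 * t₀))), ∀ p ∈ U,
      c * |(p.2 : ℝ × ℝ).1| ≤ |mixedHessianDetXU Φ p.1 p.2| := by
  have hKpos : 0 < |carlesonSjolinDet φ x₀ t₀| := abs_pos.2 hCS
  set K := carlesonSjolinDet φ x₀ t₀ with hKdef
  have hb0 := (bF_smooth hφ 0).continuous
  have hb1 := (bF_smooth hφ 1).continuous
  have hc0 := (cF_smooth hφ 0).continuous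
  have hc1 := (cF_smooth hφ 1).continuous
  have hDcont : Continuous (DFaux φ) := by
    unfold DFaux
    fun_prop
  have hval : DFaux φ (x₀, (t₀, (t₀, t₀))) = K := by
    rw [hKdef, carlesonSjolinDet_eq hφ]; rfl
  have hSopen : IsOpen {q : E2aux × ℝ × ℝ × ℝ | |K| / 2 < |DFaux φ q|} :=
    isOpen_lt continuous_const hDcont.abs
  have hmem : ((x₀, (t₀, (t₀, t₀))) : E2aux × ℝ × ℝ × ℝ) ∈
      {q : E2aux × ℝ × ℝ × ℝ | |K| / 2 < |DFaux φ q|} := by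
    simp only [Set.mem_setOf_eq, hval]
    linarith
  obtain ⟨ε, hε, hball⟩ := Metric.isOpen_iff.mp hSopen _ hmem
  refine ⟨|K| / 4, by linarith, {p : E2aux × (ℝ × ℝ) | dist p.1 x₀ < ε ∧
      |(p.2.2 + p.2.1) / 2 - t₀| < ε ∧ |(p.2.2 - p.2.1) / 2 - t₀| < ε}, ?_, ?_⟩
  · have hopen : IsOpen {p : E2aux × (ℝ × ℝ) | dist p.1 x₀ < ε ∧
        |(p.2.2 + p.2.1) / 2 - t₀| < ε ∧ |(p.2.2 - p.2.1) / 2 - t₀| < ε} := by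
      have h1 : IsOpen {p : E2aux × (ℝ × ℝ) | dist p.1 x₀ < ε} :=
        isOpen_lt (continuous_fst.dist continuous_const) continuous_const
      have h2 : IsOpen {p : E2aux × (ℝ × ℝ) | |(p.2.2 + p.2.1) / 2 - t₀| < ε} :=
        isOpen_lt (Continuous.abs
          (((continuous_snd.snd.add continuous_snd.fst).div_const 2).sub continuous_const))
          continuous_const
      have h3 : IsOpen {p : E2aux × (ℝ × ℝ) | |(p.2.2 - p.2.1) / 2 - t₀| < ε} :=
        isOpen_lt (Continuous.abs
          (((continuous_snd.snd.sub continuous_snd.fst).div_const 2).sub continuous_const))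
          continuous_const
      exact h1.inter (h2.inter h3)
    refine hopen.mem_nhds ?_
    refine ⟨by simpa using hε, ?_, ?_⟩
    · show |((2 * t₀ + 0) / 2 : ℝ) - t₀| < ε
      rw [show ((2 * t₀ + 0) / 2 : ℝ) - t₀ = 0 by ring]
      simpa using hε
    · show |((2 * t₀ - 0) / 2 : ℝ) - t₀| < ε
      rw [show ((2 * t₀ - 0) / 2 : ℝ) - t₀ = 0 by ring]
      simpa using hε
  · rintro ⟨x, u⟩ ⟨hx, hs, hr⟩
    have hx : dist x x₀ < ε := by simpa using hx
    have hs : |(u.2 + u.1) / 2 - t₀| < ε := by simpa using hs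
    have hr : |(u.2 - u.1) / 2 - t₀| < ε := by simpa using hr
    show |K| / 4 * |u.1| ≤ |mixedHessianDetXU Φ x u|
    by_cases hu : u.1 = 0
    · rw [hu]
      simp
    · set s := (u.2 + u.1) / 2 with hsdef
      set r := (u.2 - u.1) / 2 with hrdef
      have hsr : s - r = u.1 := by rw [hsdef, hrdef]; ring
      have hne : r ≠ s := fun h => hu (by rw [← hsr, h, sub_self])
      obtain ⟨ξ₀, hξ₀m, hξ₀⟩ := myMVT (f := fun τ => bF φ 0 (x, τ))
        (f' := fun τ => cF φ 0 (x, τ)) (fun τ => hasDerivAt_bF hφ 0 x τ) hne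
      obtain ⟨ξ₁, hξ₁m, hξ₁⟩ := myMVT (f := fun τ => bF φ 1 (x, τ))
        (f' := fun τ => cF φ 1 (x, τ)) (fun τ => hasDerivAt_bF hφ 1 x τ) hne
      have hsa := abs_lt.mp hs
      have hra := abs_lt.mp hr
      have hbound : ∀ ξ : ℝ, ξ ∈ Set.Ioo (min r s) (max r s) → |ξ - t₀| < ε := by
        intro ξ hξ
        have h1 : t₀ - ε < min r s := lt_min (by linarith [hra.1]) (by linarith [hsa.1])
        have h2 : max r s < t₀ + ε := max_lt (by linarith [hra.2]) (by linarith [hsa.2])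
        exact abs_lt.mpr ⟨by linarith [hξ.1], by linarith [hξ.2]⟩
      have hq : ((x, (s, (ξ₀, ξ₁))) : E2aux × ℝ × ℝ × ℝ) ∈
          Metric.ball ((x₀, (t₀, (t₀, t₀))) : E2aux × ℝ × ℝ × ℝ) ε := by
        simp only [Metric.mem_ball, Prod.dist_eq, Real.dist_eq, max_lt_iff]
        exact ⟨hx, hs, hbound ξ₀ hξ₀m, hbound ξ₁ hξ₁m⟩
      have hD : |K| / 2 < |DFaux φ (x, (s, (ξ₀, ξ₁)))| := hball hq
      have hdet := det_eq hφ Φ hΦ x u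
      rw [← hsdef, ← hrdef] at hdet
      have key : bF φ 0 (x, s) * bF φ 1 (x, r) - bF φ 0 (x, r) * bF φ 1 (x, s)
          = -((s - r) * DFaux φ (x, (s, (ξ₀, ξ₁)))) := by
        simp only [DFaux]
        linear_combination bF φ 1 (x, s) * hξ₀ - bF φ 0 (x, s) * hξ₁
      rw [hdet, key, hsr, abs_div, abs_neg, abs_mul, show |(2:ℝ)| = 2 by norm_num]
      calc |K| / 4 * |u.1| = |u.1| * (|K| / 2) / 2 := by ring
        _ ≤ |u.1| * |DFaux φ (x, (s, (ξ₀, ξ₁)))| / 2 := by gcongr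


end
end

section
/- Fix a real number p with 2 ≤ p ≤ 6. Then there exist constants c_p, C_p > 0 such that for every integer k ≥ 1, c_p k^{(1/2)(1/2 − 1/p)} ≤ ( ∫_{S²} ( k^{1/4} (x₁² + x₂²)^{k/2} )^p dσ(x) )^{1/p} ≤ C_p k^{(1/2)(1/2 − 1/p)}. Equivalently, the L^p(S²)-norm of the highest weight spherical harmonic Q_k(x) = k^{1/4}(x₁ + i x₂)^k is comparable to k^{(1/2)(1/2 − 1/p)}, uniformly in k. -/
open MeasureTheory Real

noncomputable section

/-- The standard surface measure on the unit sphere `S² ⊆ ℝ³`. -/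
def sphereSurfaceMeasure : Measure (Metric.sphere (0 : EuclideanSpace ℝ (Fin 3)) 1) :=
  (volume : Measure (EuclideanSpace ℝ (Fin 3))).toSphere

section Helpers

open Set Metric

local notation "E3" => EuclideanSpace ℝ (Fin 3)
local notation "E2" => EuclideanSpace ℝ (Fin 2)

lemma integral_volumeIoiPow (n : ℕ) (g : ℝ → ℝ) :
    ∫ r : Ioi (0:ℝ), g r ∂(MeasureTheory.Measure.volumeIoiPow n)
      = ∫ r in Ioi (0:ℝ), r ^ n * g r := by
  simp only [MeasureTheory.Measure.volumeIoiPow, ENNReal.ofReal]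
  rw [integral_withDensity_eq_integral_smul
      ((measurable_subtype_coe.pow_const _).real_toNNReal),
    integral_subtype_comap measurableSet_Ioi fun a ↦ Real.toNNReal (a ^ n) • g a,
    setIntegral_congr_fun measurableSet_Ioi fun x hx ↦ ?_]
  rw [NNReal.smul_def, Real.coe_toNNReal _ (pow_nonneg hx.out.le _), smul_eq_mul]

lemma polar_step (s : ℝ) :
    ∫ x : E3, ((x 0) ^ 2 + (x 1) ^ 2) ^ s * Real.exp (-‖x‖ ^ 2)
      = (∫ y : sphere (0 : E3) 1, (((y : E3) 0) ^ 2 + ((y : E3) 1) ^ 2) ^ s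
          ∂(volume : Measure E3).toSphere)
        * ∫ r in Ioi (0:ℝ), r ^ 2 * ((r ^ 2) ^ s * Real.exp (-r ^ 2)) := by
  have hdim : Module.finrank ℝ E3 = 3 := by simp [finrank_euclideanSpace]
  calc
    ∫ x : E3, ((x 0) ^ 2 + (x 1) ^ 2) ^ s * Real.exp (-‖x‖ ^ 2)
      = ∫ x : ({(0:E3)}ᶜ : Set E3), (((x:E3) 0) ^ 2 + ((x:E3) 1) ^ 2) ^ s
          * Real.exp (-‖(x:E3)‖ ^ 2) ∂((volume : Measure E3).comap (↑)) := by
        have := integral_subtype_comap (μ := (volume : Measure E3))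
          (measurableSet_singleton (0:E3)).compl
          (fun x : E3 ↦ ((x 0) ^ 2 + (x 1) ^ 2) ^ s * Real.exp (-‖x‖ ^ 2))
        rw [MeasureTheory.restrict_compl_singleton] at this
        exact this.symm
    _ = ∫ z : sphere (0 : E3) 1 × Ioi (0:ℝ),
          ((((z.1 : E3)) 0 ^ 2 + ((z.1 : E3)) 1 ^ 2) ^ s)
            * (((z.2 : ℝ) ^ 2) ^ s * Real.exp (-(z.2:ℝ) ^ 2))
          ∂((volume : Measure E3).toSphere.prod
              (.volumeIoiPow (Module.finrank ℝ E3 - 1))) := by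
        rw [← ((volume : Measure E3).measurePreserving_homeomorphUnitSphereProd).integral_comp
          (Homeomorph.measurableEmbedding _)
          (fun z : sphere (0:E3) 1 × Ioi (0:ℝ) ↦
            ((((z.1 : E3)) 0 ^ 2 + ((z.1 : E3)) 1 ^ 2) ^ s)
              * (((z.2 : ℝ) ^ 2) ^ s * Real.exp (-(z.2:ℝ) ^ 2)))]
        refine integral_congr_ae (Filter.Eventually.of_forall fun x ↦ ?_)
        have hx0 : (x : E3) ≠ 0 := x.2
        have hn : ‖(x:E3)‖ ≠ 0 := norm_ne_zero_iff.2 hx0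
        simp only [homeomorphUnitSphereProd_apply_fst_coe,
          homeomorphUnitSphereProd_apply_snd_coe, PiLp.smul_apply, smul_eq_mul]
        rw [← mul_assoc, ← Real.mul_rpow (by positivity) (by positivity)]
        have hb : ((‖(x:E3)‖⁻¹ * (x:E3) 0) ^ 2 + (‖(x:E3)‖⁻¹ * (x:E3) 1) ^ 2) * ‖(x:E3)‖ ^ 2
            = (x:E3) 0 ^ 2 + (x:E3) 1 ^ 2 := by
          field_simp
          try ring
        rw [hb]
    _ = _ := by
        have hm : (MeasureTheory.Measure.volumeIoiPow (Module.finrank ℝ E3 - 1))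
            = MeasureTheory.Measure.volumeIoiPow 2 := by rw [hdim]
        rw [integral_prod_mul
          (f := fun y : sphere (0:E3) 1 ↦ (((y : E3)) 0 ^ 2 + ((y : E3)) 1 ^ 2) ^ s)
          (g := fun r : Ioi (0:ℝ) ↦ ((r : ℝ) ^ 2) ^ s * Real.exp (-(r:ℝ) ^ 2)),
          hm, integral_volumeIoiPow 2 (fun t ↦ ((t:ℝ) ^ 2) ^ s * Real.exp (-t ^ 2))]

lemma mellin_sq (s c : ℝ) (hs : 0 ≤ s) (hc : 0 ≤ c) :
    ∫ r in Ioi (0:ℝ), r ^ (c : ℝ) * ((r ^ 2) ^ s * Real.exp (-r ^ 2))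
      = Real.Gamma ((2 * s + c + 1) / 2) / 2 := by
  have h1 : ∫ r in Ioi (0:ℝ), r ^ (c : ℝ) * ((r ^ 2) ^ s * Real.exp (-r ^ 2))
      = ∫ r in Ioi (0:ℝ), r ^ (2 * s + c) * Real.exp (-r ^ (2:ℝ)) := by
    refine setIntegral_congr_fun measurableSet_Ioi fun x hx ↦ ?_
    have hx0 : (0:ℝ) < x := hx
    have h2 : (x : ℝ) ^ (2:ℕ) = x ^ ((2:ℕ) : ℝ) := (Real.rpow_natCast x 2).symm
    rw [h2]
    push_cast
    rw [← Real.rpow_mul hx0.le, ← mul_assoc, ← Real.rpow_add hx0, add_comm c (2 * s)]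
  rw [h1, integral_rpow_mul_exp_neg_rpow two_pos (by linarith)]
  ring_nf

lemma mellin_lin (s : ℝ) (hs : 0 ≤ s) :
    ∫ r in Ioi (0:ℝ), r * ((r ^ 2) ^ s * Real.exp (-r ^ 2))
      = Real.Gamma (s + 1) / 2 := by
  have h := mellin_sq s 1 hs zero_le_one
  rw [show (2 * s + 1 + 1) / 2 = s + 1 by ring] at h
  rw [← h]
  exact setIntegral_congr_fun measurableSet_Ioi fun x hx ↦ by rw [Real.rpow_one]

lemma mellin_quad (s : ℝ) (hs : 0 ≤ s) :
    ∫ r in Ioi (0:ℝ), r ^ 2 * ((r ^ 2) ^ s * Real.exp (-r ^ 2))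
      = Real.Gamma (s + 3 / 2) / 2 := by
  have h := mellin_sq s 2 hs (by norm_num)
  rw [show (2 * s + 2 + 1) / 2 = s + 3 / 2 by ring] at h
  rw [← h]
  refine setIntegral_congr_fun measurableSet_Ioi fun x hx ↦ ?_
  rw [show ((2:ℝ)) = ((2:ℕ) : ℝ) by norm_num, Real.rpow_natCast]


lemma gauss2 (s : ℝ) (hs : 0 ≤ s) :
    ∫ z : Fin 2 → ℝ, (z 0 ^ 2 + z 1 ^ 2) ^ s * Real.exp (-(z 0 ^ 2 + z 1 ^ 2))
      = π * Real.Gamma (s + 1) := by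
  have h1 : ∫ z : Fin 2 → ℝ, (z 0 ^ 2 + z 1 ^ 2) ^ s * Real.exp (-(z 0 ^ 2 + z 1 ^ 2))
      = ∫ w : E2, (‖w‖ ^ 2) ^ s * Real.exp (-‖w‖ ^ 2) := by
    rw [← (EuclideanSpace.volume_preserving_symm_measurableEquiv_toLp (Fin 2)).integral_comp
      (MeasurableEquiv.measurableEmbedding _)
      (fun z : Fin 2 → ℝ ↦ (z 0 ^ 2 + z 1 ^ 2) ^ s * Real.exp (-(z 0 ^ 2 + z 1 ^ 2)))]
    refine integral_congr_ae (Filter.Eventually.of_forall fun w ↦ ?_)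
    have hw : ‖w‖ ^ 2 = w 0 ^ 2 + w 1 ^ 2 := by
      rw [EuclideanSpace.norm_eq, Real.sq_sqrt (by positivity), Fin.sum_univ_two]
      simp [sq_abs]
    have he : ∀ i, (MeasurableEquiv.toLp 2 (Fin 2 → ℝ)).symm w i = w i := fun _ ↦ rfl
    simp only [he, hw]
  rw [h1]
  have h2 := integral_fun_norm_addHaar (volume : Measure E2)
    (fun r : ℝ ↦ (r ^ 2) ^ s * Real.exp (-r ^ 2))
  simp only [finrank_euclideanSpace, Fintype.card_fin] at h2
  rw [h2]
  have hball : ((volume : Measure E2) (Metric.ball 0 1)).toReal = π := by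
    rw [EuclideanSpace.volume_ball]
    simp [Real.sq_sqrt Real.pi_nonneg]
    rw [show (1:ℝ) + 1 = 2 by norm_num, Real.Gamma_two]
    simp [Real.pi_nonneg]
  rw [measureReal_def, hball]
  have h3 : ∫ y in Ioi (0:ℝ), y ^ (2 - 1 : ℕ) • ((y ^ 2) ^ s * Real.exp (-y ^ 2))
      = Real.Gamma (s + 1) / 2 := by
    rw [← mellin_lin s hs]
    refine setIntegral_congr_fun measurableSet_Ioi fun x hx ↦ ?_
    norm_num
  rw [h3]
  simp only [smul_eq_mul, nsmul_eq_mul]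
  push_cast
  ring

lemma gauss3 (s : ℝ) (hs : 0 ≤ s) :
    ∫ x : E3, (x 0 ^ 2 + x 1 ^ 2) ^ s * Real.exp (-‖x‖ ^ 2)
      = Real.sqrt π * (π * Real.Gamma (s + 1)) := by
  have h1 : ∫ x : E3, (x 0 ^ 2 + x 1 ^ 2) ^ s * Real.exp (-‖x‖ ^ 2)
      = ∫ y : Fin 3 → ℝ, (y 0 ^ 2 + y 1 ^ 2) ^ s
          * Real.exp (-(y 0 ^ 2 + y 1 ^ 2 + y 2 ^ 2)) := by
    rw [← (EuclideanSpace.volume_preserving_symm_measurableEquiv_toLp (Fin 3)).integral_comp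
      (MeasurableEquiv.measurableEmbedding _)
      (fun y : Fin 3 → ℝ ↦ (y 0 ^ 2 + y 1 ^ 2) ^ s
          * Real.exp (-(y 0 ^ 2 + y 1 ^ 2 + y 2 ^ 2)))]
    refine integral_congr_ae (Filter.Eventually.of_forall fun x ↦ ?_)
    have hx : ‖x‖ ^ 2 = x 0 ^ 2 + x 1 ^ 2 + x 2 ^ 2 := by
      rw [EuclideanSpace.norm_eq, Real.sq_sqrt (by positivity), Fin.sum_univ_three]
      simp [sq_abs]
    have he : ∀ i, (MeasurableEquiv.toLp 2 (Fin 3 → ℝ)).symm x i = x i := fun _ ↦ rfl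
    simp only [he, hx]
  have h2 : ∫ y : Fin 3 → ℝ, (y 0 ^ 2 + y 1 ^ 2) ^ s
          * Real.exp (-(y 0 ^ 2 + y 1 ^ 2 + y 2 ^ 2))
      = ∫ p : ℝ × (Fin 2 → ℝ), Real.exp (-p.1 ^ 2)
          * ((p.2 0 ^ 2 + p.2 1 ^ 2) ^ s * Real.exp (-(p.2 0 ^ 2 + p.2 1 ^ 2))) := by
    rw [← (volume_preserving_piFinSuccAbove (fun _ : Fin 3 ↦ ℝ) 2).integral_comp
      (MeasurableEquiv.measurableEmbedding _)
      (fun p : ℝ × (Fin 2 → ℝ) ↦ Real.exp (-p.1 ^ 2)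
          * ((p.2 0 ^ 2 + p.2 1 ^ 2) ^ s * Real.exp (-(p.2 0 ^ 2 + p.2 1 ^ 2))))]
    refine integral_congr_ae (Filter.Eventually.of_forall fun y ↦ ?_)
    have e1 : (MeasurableEquiv.piFinSuccAbove (fun _ : Fin 3 ↦ ℝ) 2 y).1 = y 2 := rfl
    have e2 : (MeasurableEquiv.piFinSuccAbove (fun _ : Fin 3 ↦ ℝ) 2 y).2 0 = y 0 := rfl
    have e3 : (MeasurableEquiv.piFinSuccAbove (fun _ : Fin 3 ↦ ℝ) 2 y).2 1 = y 1 := rfl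
    simp only [e1, e2, e3]
    rw [show -(y 0 ^ 2 + y 1 ^ 2 + y 2 ^ 2) = -(y 0 ^ 2 + y 1 ^ 2) + -(y 2 ^ 2) by ring,
      Real.exp_add]
    ring
  rw [h1, h2, Measure.volume_eq_prod, integral_prod_mul (f := fun t : ℝ ↦ Real.exp (-t ^ 2))
    (g := fun z : Fin 2 → ℝ ↦ (z 0 ^ 2 + z 1 ^ 2) ^ s * Real.exp (-(z 0 ^ 2 + z 1 ^ 2))),
    gauss2 s hs]
  have hg : ∫ t : ℝ, Real.exp (-t ^ 2) = Real.sqrt π := by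
    simpa using integral_gaussian 1
  rw [hg]

lemma gamma_midpoint {x : ℝ} (hx : 0 < x) :
    Real.Gamma (x + 1 / 2) ≤ Real.sqrt (Real.Gamma x * Real.Gamma (x + 1)) := by
  have h := Real.convexOn_log_Gamma.2 (mem_Ioi.2 hx) (mem_Ioi.2 (by linarith : (0:ℝ) < x + 1))
    (by norm_num : (0:ℝ) ≤ (1/2:ℝ)) (by norm_num : (0:ℝ) ≤ (1/2:ℝ)) (by norm_num)
  simp only [smul_eq_mul, Function.comp_apply] at h
  have hx2 : (1/2 : ℝ) * x + 1/2 * (x + 1) = x + 1/2 := by ring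
  rw [hx2] at h
  have hg1 : 0 < Real.Gamma x := Real.Gamma_pos_of_pos hx
  have hg2 : 0 < Real.Gamma (x + 1) := Real.Gamma_pos_of_pos (by linarith)
  have hg3 : 0 < Real.Gamma (x + 1/2) := Real.Gamma_pos_of_pos (by linarith)
  have hsq : Real.sqrt (Real.Gamma x * Real.Gamma (x + 1))
      = Real.exp (1/2 * Real.log (Real.Gamma x) + 1/2 * Real.log (Real.Gamma (x + 1))) := by
    rw [Real.sqrt_eq_rpow, Real.rpow_def_of_pos (mul_pos hg1 hg2),
      Real.log_mul hg1.ne' hg2.ne']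
    congr 1
    ring
  rw [hsq, ← Real.exp_log hg3]
  exact Real.exp_le_exp.2 h

lemma gamma_ratio_bounds {s : ℝ} (hs : 0 < s) :
    Real.Gamma (s + 3/2) ≤ Real.Gamma (s + 1) * Real.sqrt (s + 1) ∧
    Real.Gamma (s + 1) * Real.sqrt s ≤ Real.Gamma (s + 3/2) := by
  constructor
  · have h := gamma_midpoint (x := s + 1) (by linarith)
    have h2 : Real.Gamma (s + 1 + 1) = (s + 1) * Real.Gamma (s + 1) := by
      rw [Real.Gamma_add_one (by linarith)]
    rw [show s + 1 + 1/2 = s + 3/2 by ring, h2] at h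
    calc Real.Gamma (s + 3/2)
        ≤ Real.sqrt (Real.Gamma (s + 1) * ((s + 1) * Real.Gamma (s + 1))) := h
      _ = Real.Gamma (s + 1) * Real.sqrt (s + 1) := by
          rw [show Real.Gamma (s + 1) * ((s + 1) * Real.Gamma (s + 1))
              = Real.Gamma (s + 1) ^ 2 * (s + 1) by ring,
            Real.sqrt_mul (by positivity), Real.sqrt_sq (Real.Gamma_pos_of_pos (by linarith)).le]
  · have h := gamma_midpoint (x := s + 1/2) (by linarith)
    rw [show s + 1/2 + 1/2 = s + 1 by ring, show s + 1/2 + 1 = s + 3/2 by ring] at h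
    have h2 : Real.Gamma (s + 1/2) = Real.Gamma (s + 3/2) / (s + 1/2) := by
      rw [show s + 3/2 = (s + 1/2) + 1 by ring, Real.Gamma_add_one (by positivity)]
      field_simp
    rw [h2] at h
    have hg3 : 0 < Real.Gamma (s + 3/2) := Real.Gamma_pos_of_pos (by linarith)
    have key : Real.sqrt (Real.Gamma (s + 3/2) / (s + 1/2) * Real.Gamma (s + 3/2))
        ≤ Real.Gamma (s + 3/2) / Real.sqrt s := by
      rw [show Real.Gamma (s + 3/2) / (s + 1/2) * Real.Gamma (s + 3/2)
          = Real.Gamma (s + 3/2) ^ 2 * (s + 1/2)⁻¹ by ring,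
        Real.sqrt_mul (by positivity), Real.sqrt_sq hg3.le, div_eq_mul_inv]
      refine mul_le_mul_of_nonneg_left ?_ hg3.le
      rw [← Real.sqrt_inv]
      exact Real.sqrt_le_sqrt (by rw [inv_le_inv₀ (by linarith) hs]; linarith)
    have := h.trans key
    rw [le_div_iff₀ (Real.sqrt_pos.2 hs)] at this
    linarith

lemma sphere_integral_val (s : ℝ) (hs : 0 ≤ s) :
    ∫ y : sphere (0 : E3) 1, (((y : E3) 0) ^ 2 + ((y : E3) 1) ^ 2) ^ s
        ∂(volume : Measure E3).toSphere
      = 2 * Real.sqrt π * π * (Real.Gamma (s + 1) / Real.Gamma (s + 3/2)) := by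
  have hpol := polar_step s
  rw [gauss3 s hs, mellin_quad s hs] at hpol
  have hg : 0 < Real.Gamma (s + 3/2) := Real.Gamma_pos_of_pos (by linarith)
  field_simp at hpol ⊢
  linarith

end Helpers

/-- For fixed `2 ≤ p ≤ 6` the `L^p(S²)`-norm of the highest weight
spherical harmonic `Q_k = k^{1/4}(x₁ + i x₂)^k`, i.e.
`(∫_{S²} (k^{1/4} (x₁² + x₂²)^{k/2})^p dσ)^{1/p}`, is comparable to
`k^{(1/2)(1/2 - 1/p)}`, uniformly in `k ≥ 1`. -/
theorem highest_weight_spherical_harmonic_Lp_comparable (p : ℝ) (hp2 : 2 ≤ p) (hp6 : p ≤ 6) :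
    ∃ c C : ℝ, 0 < c ∧ 0 < C ∧ ∀ k : ℕ, 1 ≤ k →
      c * (k : ℝ) ^ ((1 / 2 : ℝ) * (1 / 2 - 1 / p)) ≤
        (∫ x : Metric.sphere (0 : EuclideanSpace ℝ (Fin 3)) 1,
            ((k : ℝ) ^ ((1 : ℝ) / 4) *
              ((x : EuclideanSpace ℝ (Fin 3)) 0 ^ 2 +
                (x : EuclideanSpace ℝ (Fin 3)) 1 ^ 2) ^ ((k : ℝ) / 2)) ^ p
            ∂sphereSurfaceMeasure) ^ (1 / p) ∧
      (∫ x : Metric.sphere (0 : EuclideanSpace ℝ (Fin 3)) 1,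
            ((k : ℝ) ^ ((1 : ℝ) / 4) *
              ((x : EuclideanSpace ℝ (Fin 3)) 0 ^ 2 +
                (x : EuclideanSpace ℝ (Fin 3)) 1 ^ 2) ^ ((k : ℝ) / 2)) ^ p
            ∂sphereSurfaceMeasure) ^ (1 / p) ≤
        C * (k : ℝ) ^ ((1 / 2 : ℝ) * (1 / 2 - 1 / p)) := by
  have hp0 : (0:ℝ) < p := by linarith
  set A : ℝ := Real.sqrt π * π with hA
  have hApos : 0 < A := by
    have := Real.pi_pos
    positivity
  refine ⟨A ^ (1/p), (2*A) ^ (1/p), Real.rpow_pos_of_pos hApos _,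
    Real.rpow_pos_of_pos (by linarith) _, fun k hk ↦ ?_⟩
  have hkpos : (0:ℝ) < (k:ℝ) := by exact_mod_cast hk.trans_lt' zero_lt_one
  have hk1 : (1:ℝ) ≤ (k:ℝ) := by exact_mod_cast hk
  set s : ℝ := (k:ℝ) / 2 * p with hs_def
  have hspos : 0 < s := by positivity
  have hks : (k:ℝ) ≤ s := by rw [hs_def]; nlinarith
  have hs4k : s + 1 ≤ 4 * (k:ℝ) := by rw [hs_def]; nlinarith
  -- rewrite the integrand
  have hI : (∫ x : Metric.sphere (0 : EuclideanSpace ℝ (Fin 3)) 1,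
            ((k : ℝ) ^ ((1 : ℝ) / 4) *
              ((x : EuclideanSpace ℝ (Fin 3)) 0 ^ 2 +
                (x : EuclideanSpace ℝ (Fin 3)) 1 ^ 2) ^ ((k : ℝ) / 2)) ^ p
            ∂sphereSurfaceMeasure)
      = (k:ℝ) ^ ((1:ℝ)/4 * p) * (2 * Real.sqrt π * π
          * (Real.Gamma (s + 1) / Real.Gamma (s + 3/2))) := by
    rw [show (∫ x : Metric.sphere (0 : EuclideanSpace ℝ (Fin 3)) 1,
            ((k : ℝ) ^ ((1 : ℝ) / 4) *
              ((x : EuclideanSpace ℝ (Fin 3)) 0 ^ 2 +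
                (x : EuclideanSpace ℝ (Fin 3)) 1 ^ 2) ^ ((k : ℝ) / 2)) ^ p
            ∂sphereSurfaceMeasure)
        = ∫ x : Metric.sphere (0 : EuclideanSpace ℝ (Fin 3)) 1,
            (k : ℝ) ^ ((1:ℝ)/4 * p) *
              ((x : EuclideanSpace ℝ (Fin 3)) 0 ^ 2 +
                (x : EuclideanSpace ℝ (Fin 3)) 1 ^ 2) ^ s
            ∂sphereSurfaceMeasure from
      integral_congr_ae (Filter.Eventually.of_forall fun x ↦ by
        have hu : (0:ℝ) ≤ (x : EuclideanSpace ℝ (Fin 3)) 0 ^ 2 +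
            (x : EuclideanSpace ℝ (Fin 3)) 1 ^ 2 := by positivity
        dsimp only
        rw [Real.mul_rpow (Real.rpow_nonneg (Nat.cast_nonneg k) _) (Real.rpow_nonneg hu _),
          ← Real.rpow_mul (Nat.cast_nonneg k), ← Real.rpow_mul hu])]
    rw [integral_const_mul, sphereSurfaceMeasure, sphere_integral_val s hspos.le]
  rw [hI]
  -- bounds on the Gamma ratio
  obtain ⟨hub, hlb⟩ := gamma_ratio_bounds hspos
  have hg1 : 0 < Real.Gamma (s + 1) := Real.Gamma_pos_of_pos (by linarith)
  have hg32 : 0 < Real.Gamma (s + 3/2) := Real.Gamma_pos_of_pos (by linarith)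
  have hsqrtk : 0 < Real.sqrt (k:ℝ) := Real.sqrt_pos.2 hkpos
  have hRlb : 1 / (2 * Real.sqrt (k:ℝ)) ≤ Real.Gamma (s + 1) / Real.Gamma (s + 3/2) := by
    rw [div_le_div_iff₀ (by positivity) hg32]
    have h1 : Real.sqrt (s + 1) ≤ 2 * Real.sqrt (k:ℝ) := by
      have : Real.sqrt (s+1) ≤ Real.sqrt (4 * (k:ℝ)) := Real.sqrt_le_sqrt hs4k
      rwa [Real.sqrt_mul (by norm_num), show Real.sqrt 4 = 2 by
        rw [show (4:ℝ) = 2^2 by norm_num, Real.sqrt_sq (by norm_num)]] at this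
    nlinarith [Real.sqrt_nonneg (s+1)]
  have hRub : Real.Gamma (s + 1) / Real.Gamma (s + 3/2) ≤ 1 / Real.sqrt (k:ℝ) := by
    rw [div_le_div_iff₀ hg32 hsqrtk]
    have h1 : Real.sqrt (k:ℝ) ≤ Real.sqrt s := Real.sqrt_le_sqrt hks
    nlinarith [Real.sqrt_nonneg s]
  -- translate to bounds on the integral
  have hkr : ∀ a : ℝ, (0:ℝ) < (k:ℝ) ^ a := fun a ↦ Real.rpow_pos_of_pos hkpos a
  have hsqrt_rpow : Real.sqrt (k:ℝ) = (k:ℝ) ^ (1/2 : ℝ) := Real.sqrt_eq_rpow _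
  have hIlb : A * (k:ℝ) ^ ((1:ℝ)/4 * p - 1/2)
      ≤ (k:ℝ) ^ ((1:ℝ)/4 * p) * (2 * Real.sqrt π * π
          * (Real.Gamma (s + 1) / Real.Gamma (s + 3/2))) := by
    have h2 : (k:ℝ) ^ ((1:ℝ)/4 * p) * (2 * Real.sqrt π * π * (1 / (2 * Real.sqrt (k:ℝ))))
        ≤ (k:ℝ) ^ ((1:ℝ)/4 * p) * (2 * Real.sqrt π * π
          * (Real.Gamma (s + 1) / Real.Gamma (s + 3/2))) := by
      have hpi := Real.pi_pos
      gcongr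
    refine le_trans (le_of_eq ?_) h2
    rw [Real.rpow_sub hkpos, hA, hsqrt_rpow]
    field_simp
  have hIub : (k:ℝ) ^ ((1:ℝ)/4 * p) * (2 * Real.sqrt π * π
          * (Real.Gamma (s + 1) / Real.Gamma (s + 3/2)))
      ≤ 2 * A * (k:ℝ) ^ ((1:ℝ)/4 * p - 1/2) := by
    have h2 : (k:ℝ) ^ ((1:ℝ)/4 * p) * (2 * Real.sqrt π * π
          * (Real.Gamma (s + 1) / Real.Gamma (s + 3/2)))
        ≤ (k:ℝ) ^ ((1:ℝ)/4 * p) * (2 * Real.sqrt π * π * (1 / Real.sqrt (k:ℝ))) := by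
      have hpi := Real.pi_pos
      gcongr
    refine h2.trans (le_of_eq ?_)
    rw [Real.rpow_sub hkpos, hA, hsqrt_rpow]
    field_simp
  have hexp : ((1:ℝ)/4 * p - 1/2) * (1/p) = (1/2 : ℝ) * (1/2 - 1/p) := by
    field_simp
    ring
  constructor
  · calc A ^ (1/p) * (k:ℝ) ^ ((1/2 : ℝ) * (1/2 - 1/p))
        = (A * (k:ℝ) ^ ((1:ℝ)/4 * p - 1/2)) ^ (1/p) := by
          rw [Real.mul_rpow hApos.le (hkr _).le, ← Real.rpow_mul hkpos.le, hexp]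
      _ ≤ _ := by
          refine Real.rpow_le_rpow (by positivity) hIlb (by positivity)
  · calc ((k:ℝ) ^ ((1:ℝ)/4 * p) * (2 * Real.sqrt π * π
          * (Real.Gamma (s + 1) / Real.Gamma (s + 3/2)))) ^ (1/p)
        ≤ (2 * A * (k:ℝ) ^ ((1:ℝ)/4 * p - 1/2)) ^ (1/p) := by
          have hpi := Real.pi_pos
          refine Real.rpow_le_rpow (by positivity) hIub (by positivity)
      _ = (2*A) ^ (1/p) * (k:ℝ) ^ ((1/2 : ℝ) * (1/2 - 1/p)) := by
          rw [Real.mul_rpow (by positivity) (hkr _).le, ← Real.rpow_mul hkpos.le, hexp]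

end
end

section
/- There exist a constant c > 0 and an integer k₀ such that for every integer k ≥ k₀, k^{1/2} ∫_{{x ∈ S² : |x₃| < sin(k^{−1/2})}} (x₁² + x₂²)^k dσ(x) ≥ c. In particular, for the highest weight spherical harmonics Q_k(x) = k^{1/4}(x₁ + i x₂)^k on S², one has liminf_{k → ∞} ∫_{T_{k^{−1/2}}(γ₀)} |Q_k|² dσ > 0, where T_{k^{−1/2}}(γ₀) = {x ∈ S² : |x₃| < sin(k^{−1/2})} is the set of points of S² at spherical (geodesic) distance less than k^{−1/2} from the equator γ₀ = {x ∈ S² : x₃ = 0}. -/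
open MeasureTheory Real

noncomputable section

section
open Set Metric
open scoped Pointwise ENNReal
set_option maxHeartbeats 1000000

namespace HWaux

abbrev E3 := EuclideanSpace ℝ (Fin 3)

lemma sphere_sum_sq (x : Metric.sphere (0 : E3) 1) :
    (x : E3) 0 ^ 2 + (x : E3) 1 ^ 2 + (x : E3) 2 ^ 2 = 1 := by
  have h : ‖(x : E3)‖ = 1 := by
    have := x.2; rwa [mem_sphere_zero_iff_norm] at this
  rw [EuclideanSpace.norm_eq] at h
  have h2 : (∑ i, ‖(x : E3) i‖ ^ 2) = 1 := by
    have hnn : (0:ℝ) ≤ ∑ i, ‖(x : E3) i‖ ^ 2 := by positivity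
    nlinarith [Real.sq_sqrt hnn]
  simpa [Fin.sum_univ_three, Real.norm_eq_abs, sq_abs] using h2

lemma tube_set_measurable (s : ℝ) :
    MeasurableSet {x : Metric.sphere (0 : E3) 1 | |(x : E3) 2| < s} := by
  have hcont : Continuous fun x : Metric.sphere (0 : E3) 1 => |(x : E3) 2| :=
    continuous_abs.comp ((EuclideanSpace.proj (2 : Fin 3)).continuous.comp continuous_subtype_val)
  exact (isOpen_Iio.preimage hcont).measurableSet

instance : IsFiniteMeasure sphereSurfaceMeasure := by
  unfold sphereSurfaceMeasure; infer_instance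

/-- Lower bound for the surface measure of the tube `{|x₂| < s}`. -/
lemma tube_measure_lb {s : ℝ} (hs0 : 0 < s) (hs1 : s ≤ 1) :
    3 * (s / 512) ≤
      (sphereSurfaceMeasure {x : Metric.sphere (0 : E3) 1 | |(x : E3) 2| < s}).toReal := by
  set S := {x : Metric.sphere (0 : E3) 1 | |(x : E3) 2| < s} with hSdef
  have hmeas : MeasurableSet S := tube_set_measurable s
  have happ : sphereSurfaceMeasure S =
      (Module.finrank ℝ E3) * volume (Ioo (0:ℝ) 1 • ((↑) '' S : Set E3)) :=
    Measure.toSphere_apply' _ hmeas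
  have hdim : (Module.finrank ℝ E3 : ℝ≥0∞) = 3 := by simp
  -- the box
  set A : Set (Fin 3 → ℝ) :=
    Set.univ.pi ![Ioo (8⁻¹:ℝ) 4⁻¹, Ioo (8⁻¹:ℝ) 4⁻¹, Ioo (-(s/16)) (s/16)] with hAdef
  set B : Set E3 := (MeasurableEquiv.toLp 2 (Fin 3 → ℝ)).symm ⁻¹' A with hBdef
  have hAmeas : MeasurableSet A := by
    apply MeasurableSet.univ_pi
    intro i
    fin_cases i <;> simp [measurableSet_Ioo]
  have hvolB : volume B = ENNReal.ofReal (s / 512) := by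
    rw [hBdef, (EuclideanSpace.volume_preserving_symm_measurableEquiv_toLp (Fin 3)).measure_preimage
      hAmeas.nullMeasurableSet, hAdef, volume_pi_pi, Fin.prod_univ_three]
    simp only [Matrix.cons_val_zero, Matrix.cons_val_one, Matrix.head_cons,
      Matrix.cons_val_two, Matrix.tail_cons, Real.volume_Ioo]
    rw [← ENNReal.ofReal_mul (by norm_num), ← ENNReal.ofReal_mul (by norm_num)]
    congr 1
    ring
  have hBsub : B ⊆ Ioo (0:ℝ) 1 • ((↑) '' S : Set E3) := by
    intro y hy
    have hy' : ∀ i, (MeasurableEquiv.toLp 2 (Fin 3 → ℝ)).symm y i ∈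
        (![Ioo (8⁻¹:ℝ) 4⁻¹, Ioo (8⁻¹:ℝ) 4⁻¹, Ioo (-(s/16)) (s/16)] i) := by
      intro i; exact hy i (mem_univ i)
    have hy0 : y 0 ∈ Ioo (8⁻¹:ℝ) 4⁻¹ := hy' 0
    have hy1 : y 1 ∈ Ioo (8⁻¹:ℝ) 4⁻¹ := hy' 1
    have hy2 : y 2 ∈ Ioo (-(s/16)) (s/16) := hy' 2
    have hy2' : |y 2| < s / 16 := abs_lt.2 ⟨by linarith [hy2.1], hy2.2⟩
    have hnorm : ‖y‖ = Real.sqrt (y 0 ^ 2 + y 1 ^ 2 + y 2 ^ 2) := by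
      rw [EuclideanSpace.norm_eq, Fin.sum_univ_three]
      simp [Real.norm_eq_abs, sq_abs]
    have hy2sq : y 2 ^ 2 < (s/16) ^ 2 := by
      rw [← sq_abs]; exact pow_lt_pow_left₀ hy2' (abs_nonneg _) (by norm_num)
    have hrpos : (8⁻¹ : ℝ) < ‖y‖ := by
      rw [hnorm]
      have h1 : (8⁻¹ : ℝ) = Real.sqrt ((8⁻¹:ℝ)^2) := by
        rw [Real.sqrt_sq (by norm_num)]
      rw [h1]
      apply Real.sqrt_lt_sqrt (by positivity)
      nlinarith [hy0.1, hy0.2, sq_nonneg (y 1), sq_nonneg (y 2)]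
    have hrpos' : (0:ℝ) < ‖y‖ := by linarith
    have hrlt1 : ‖y‖ < 1 := by
      rw [hnorm]
      have h1 : (1:ℝ) = Real.sqrt 1 := by simp
      rw [h1]
      apply Real.sqrt_lt_sqrt (by positivity)
      nlinarith [hy0.1, hy0.2, hy1.1, hy1.2, hy2sq, hs1, hs0]
    set x : E3 := ‖y‖⁻¹ • y with hxdef
    have hxnorm : ‖x‖ = 1 := by
      rw [hxdef, norm_smul, Real.norm_eq_abs, abs_inv, abs_of_pos hrpos',
        inv_mul_cancel₀ hrpos'.ne']
    have hxsphere : x ∈ Metric.sphere (0 : E3) 1 := by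
      rwa [mem_sphere_zero_iff_norm]
    have hx2 : |x 2| < s := by
      have hx2eq : x 2 = ‖y‖⁻¹ * y 2 := rfl
      rw [hx2eq, abs_mul, abs_inv, abs_of_pos hrpos']
      have hinv : ‖y‖⁻¹ < 8 := by
        rw [inv_lt_comm₀ hrpos' (by norm_num : (0:ℝ) < 8)]
        linarith
      have hinvpos : (0:ℝ) < ‖y‖⁻¹ := inv_pos.2 hrpos'
      nlinarith [abs_nonneg (y 2)]
    refine Set.mem_smul.2 ⟨‖y‖, ⟨hrpos', hrlt1⟩, x, ⟨⟨x, hxsphere⟩, hx2, rfl⟩, ?_⟩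
    rw [hxdef, smul_inv_smul₀ hrpos'.ne']
  -- combine
  have hσ : ENNReal.ofReal (3 * (s / 512)) ≤ sphereSurfaceMeasure S := by
    rw [happ, hdim]
    calc ENNReal.ofReal (3 * (s / 512)) = 3 * ENNReal.ofReal (s / 512) := by
          rw [ENNReal.ofReal_mul (by norm_num)]; norm_num
      _ ≤ 3 * volume (Ioo (0:ℝ) 1 • ((↑) '' S : Set E3)) := by
          gcongr
          rw [← hvolB]; exact measure_mono hBsub
  have hfin : sphereSurfaceMeasure S ≠ ⊤ := measure_ne_top _ _
  exact (ENNReal.ofReal_le_iff_le_toReal hfin).1 hσ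

end HWaux

end

set_option maxHeartbeats 1000000 in
open HWaux in
/-- There are `c > 0` and `k₀` such that for all `k ≥ k₀`,
`k^{1/2} ∫_{{x ∈ S² : |x₃| < sin (k^{-1/2})}} (x₁² + x₂²)^k dσ ≥ c`; i.e. the highest
weight spherical harmonics `Q_k` keep a fixed positive amount of `L²`-mass in the tube of
width `k^{-1/2}` around the equator `{x₃ = 0}`. -/
theorem highest_weight_mass_on_equatorial_tube :
    ∃ c : ℝ, 0 < c ∧ ∃ k₀ : ℕ, ∀ k : ℕ, k₀ ≤ k →
      c ≤ (k : ℝ) ^ ((1 : ℝ) / 2) *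
          ∫ x : Metric.sphere (0 : EuclideanSpace ℝ (Fin 3)) 1 in
              {x : Metric.sphere (0 : EuclideanSpace ℝ (Fin 3)) 1 |
                |(x : EuclideanSpace ℝ (Fin 3)) 2| < Real.sin ((k : ℝ) ^ (-(1 : ℝ) / 2))},
            ((x : EuclideanSpace ℝ (Fin 3)) 0 ^ 2 + (x : EuclideanSpace ℝ (Fin 3)) 1 ^ 2) ^ k
            ∂sphereSurfaceMeasure := by
  refine ⟨3 * Real.exp (-2) / 1024, by positivity, 4, fun k hk => ?_⟩
  have hk4 : (4:ℝ) ≤ (k:ℝ) := by exact_mod_cast hk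
  have hkpos : (0:ℝ) < (k:ℝ) := by linarith
  set t : ℝ := (k : ℝ) ^ (-(1 : ℝ) / 2) with htdef
  have ht_pos : 0 < t := Real.rpow_pos_of_pos hkpos _
  have ht2 : t ^ 2 = (k:ℝ)⁻¹ := by
    rw [htdef, ← Real.rpow_natCast ((k:ℝ) ^ (-(1:ℝ)/2)) 2, ← Real.rpow_mul hkpos.le]
    norm_num
    rw [Real.rpow_neg_one]
  have ht_le : t ≤ 1/2 := by nlinarith [ht2, ht_pos, hk4, inv_anti₀ (by norm_num : (0:ℝ)<4) hk4]
  set s : ℝ := Real.sin t with hsdef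
  have hs_pos : 0 < s := Real.sin_pos_of_pos_of_lt_pi ht_pos (by linarith [Real.pi_gt_three])
  have hs_le1 : s ≤ 1 := Real.sin_le_one t
  have hs_le_t : s ≤ t := Real.sin_le ht_pos.le
  have hs_half : t / 2 ≤ s := by
    have := Real.sin_gt_sub_cube ht_pos
    nlinarith
  set S := {x : Metric.sphere (0 : E3) 1 | |(x : E3) 2| < s} with hSdef
  -- pointwise bound on the integrand
  have hpoint : ∀ x ∈ S, Real.exp (-2) ≤
      ((x : E3) 0 ^ 2 + (x : E3) 1 ^ 2) ^ k := by
    intro x hx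
    have hsum := sphere_sum_sq x
    have hx2 : |(x : E3) 2| < s := hx
    have hx2sq : (x : E3) 2 ^ 2 < (k:ℝ)⁻¹ := by
      rw [← ht2, ← sq_abs]
      calc |(x : E3) 2| ^ 2 < s ^ 2 := by
            exact pow_lt_pow_left₀ hx2 (abs_nonneg _) (by norm_num)
        _ ≤ t ^ 2 := by nlinarith
    have hge : 1 - (k:ℝ)⁻¹ ≤ (x : E3) 0 ^ 2 + (x : E3) 1 ^ 2 := by nlinarith
    have hexp : Real.exp (-2 / (k:ℝ)) ≤ 1 - (k:ℝ)⁻¹ := by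
      have h1 : (2/(k:ℝ)) + 1 ≤ Real.exp (2/(k:ℝ)) := Real.add_one_le_exp _
      have h2 : Real.exp (-2/(k:ℝ)) = (Real.exp (2/(k:ℝ)))⁻¹ := by
        rw [← Real.exp_neg]; ring_nf
      rw [h2]
      have hepos : 0 < Real.exp (2/(k:ℝ)) := Real.exp_pos _
      rw [inv_le_iff_one_le_mul₀ hepos]
      have hik : (k:ℝ)⁻¹ ≤ 1/4 := by
        rw [inv_le_comm₀ hkpos (by norm_num)] ; linarith
      have hikpos : 0 < (k:ℝ)⁻¹ := inv_pos.2 hkpos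
      have hk2 : 2/(k:ℝ) = 2 * (k:ℝ)⁻¹ := by ring
      nlinarith [mul_pos hikpos hikpos]
    have hexp2 : Real.exp (-2) = Real.exp (-2 / (k:ℝ)) ^ k := by
      rw [← Real.exp_nat_mul]
      congr 1
      field_simp
    rw [hexp2]
    exact pow_le_pow_left₀ (Real.exp_pos _).le (le_trans hexp hge) k
  -- integrability
  have hcont : Continuous fun x : Metric.sphere (0 : E3) 1 =>
      ((x : E3) 0 ^ 2 + (x : E3) 1 ^ 2) ^ k := by
    apply Continuous.pow
    exact (((EuclideanSpace.proj (0 : Fin 3)).continuous.comp continuous_subtype_val).pow 2).add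
      (((EuclideanSpace.proj (1 : Fin 3)).continuous.comp continuous_subtype_val).pow 2)
  have hint : IntegrableOn (fun x : Metric.sphere (0 : E3) 1 =>
      ((x : E3) 0 ^ 2 + (x : E3) 1 ^ 2) ^ k) S sphereSurfaceMeasure := by
    apply Integrable.integrableOn
    apply Integrable.mono' (integrable_const (1:ℝ)) hcont.aestronglyMeasurable
    filter_upwards with x
    have hsum := sphere_sum_sq x
    have h1 : (0:ℝ) ≤ (x : E3) 0 ^ 2 + (x : E3) 1 ^ 2 := by positivity
    have h2 : (x : E3) 0 ^ 2 + (x : E3) 1 ^ 2 ≤ 1 := by nlinarith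
    rw [Real.norm_eq_abs, abs_of_nonneg (by positivity)]
    exact pow_le_one₀ h1 h2
  -- lower bound via constant on the tube
  have hlow : Real.exp (-2) * (sphereSurfaceMeasure S).toReal ≤
      ∫ x in S, ((x : E3) 0 ^ 2 + (x : E3) 1 ^ 2) ^ k ∂sphereSurfaceMeasure :=
    by
      have := setIntegral_ge_of_const_le (tube_set_measurable s) (measure_ne_top _ _) hpoint hint
      rw [Measure.real, smul_eq_mul, mul_comm] at this
      exact this
  have hmeaslb : 3 * (s / 512) ≤ (sphereSurfaceMeasure S).toReal := tube_measure_lb hs_pos hs_le1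
  have hkt : (k:ℝ) ^ ((1:ℝ)/2) * t = 1 := by
    rw [htdef, ← Real.rpow_add hkpos]
    norm_num
  have hkrt_pos : (0:ℝ) < (k:ℝ) ^ ((1:ℝ)/2) := Real.rpow_pos_of_pos hkpos _
  calc 3 * Real.exp (-2) / 1024
      ≤ (k:ℝ) ^ ((1:ℝ)/2) * (Real.exp (-2) * (3 * (s/512))) := by
        have h1 : Real.exp (-2) * (3 * (s/512)) ≥ Real.exp (-2) * (3 * (t/2/512)) := by
          have := Real.exp_pos (-2); nlinarith
        have h2 : (k:ℝ) ^ ((1:ℝ)/2) * (Real.exp (-2) * (3 * (t/2/1024 * 2))) ≥ 0 := by positivity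
        have h3 : (k:ℝ) ^ ((1:ℝ)/2) * (Real.exp (-2) * (3 * (t/2/512)))
            = 3 * Real.exp (-2) / 1024 := by
          have : (k:ℝ) ^ ((1:ℝ)/2) * (Real.exp (-2) * (3 * (t/2/512)))
              = ((k:ℝ) ^ ((1:ℝ)/2) * t) * (Real.exp (-2) * 3 / 1024) := by ring
          rw [this, hkt]; ring
        nlinarith [mul_le_mul_of_nonneg_left h1.le hkrt_pos.le]
    _ ≤ (k:ℝ) ^ ((1:ℝ)/2) * (Real.exp (-2) * (sphereSurfaceMeasure S).toReal) := by
        gcongr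
    _ ≤ (k:ℝ) ^ ((1:ℝ)/2) *
        ∫ x in S, ((x : E3) 0 ^ 2 + (x : E3) 1 ^ 2) ^ k ∂sphereSurfaceMeasure := by
        gcongr

end
end
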